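/- arXiv:2412.11225 — 2 statements merged into one kernel-verified Lean document; each statement's English description precedes it below -/
import Mathlib

section
/- Let $G$ be a topological group acting continuously on a space $X$, let $E$ be another $G$-space, and let $f \colon E \to X$ be a $G$-equivariant continuous map. If $X$ is $G$-locally retractile, then $f$ is a locally trivial fibration (fiber bundle). -/
/-- A `G`-equivariant continuous map `f : E → X` to a `G`-locally retractile space `X` is a
locally trivial fibration: around every point of `X` there is an open set `U` over which `f`
is trivialized, with fiber `f ⁻¹' {x}`. -/
theorem stmt12 (G X E : Type*) [Group G] [TopologicalSpace G] [IsTopologicalGroup G]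
    [TopologicalSpace X] [MulAction G X] [ContinuousSMul G X]
    [TopologicalSpace E] [MulAction G E] [ContinuousSMul G E]
    (f : E → X) (hf : Continuous f) (heq : ∀ (g : G) (e : E), f (g • e) = g • f e)
    (hret : ∀ x : X, ∃ U : Set X, IsOpen U ∧ x ∈ U ∧
      ∃ ξ : C(U, G), ∀ y : U, ξ y • x = (y : X)) :
    ∀ x : X, ∃ U : Set X, IsOpen U ∧ x ∈ U ∧
      ∃ e : (f ⁻¹' U) ≃ₜ U × (f ⁻¹' {x}), ∀ z : f ⁻¹' U, ((e z).1 : X) = f z := by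
  intro x
  obtain ⟨U, hU, hxU, ξ, hξ⟩ := hret x
  have hxy : ∀ y : U, (ξ y)⁻¹ • (y : X) = x := fun y => by
    rw [← hξ y, inv_smul_smul]
  refine ⟨U, hU, hxU, ⟨{
      toFun := fun z => (⟨f z, z.2⟩, ⟨(ξ ⟨f z, z.2⟩)⁻¹ • (z : E), by
        have : f ((ξ (⟨f z, z.2⟩ : U))⁻¹ • (z : E)) = x := by
          rw [heq]; exact hxy ⟨f z, z.2⟩
        simp only [Set.mem_preimage, Set.mem_singleton_iff]; exact this⟩)
      invFun := fun p => ⟨ξ p.1 • (p.2 : E), by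
        have h2 : f (p.2 : E) = x := p.2.2
        have : f (ξ p.1 • (p.2 : E)) = (p.1 : X) := by
          rw [heq, h2, hξ]
        simp only [Set.mem_preimage, this]; exact p.1.2⟩
      left_inv := fun z => by
        simp only [Subtype.coe_mk]
        ext
        simp [smul_inv_smul]
      right_inv := fun p => by
        have h2 : f (p.2 : E) = x := p.2.2
        have hfv : f (ξ p.1 • (p.2 : E)) = (p.1 : X) := by
          rw [heq, h2, hξ]
        have hq : (⟨f (ξ p.1 • (p.2 : E)), by rw [hfv]; exact p.1.2⟩ : U) = p.1 :=
          Subtype.ext hfv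
        ext
        · exact hfv
        · simp only [hq, inv_smul_smul]
      continuous_toFun := by
        refine Continuous.prodMk ?_ ?_
        · exact Continuous.subtype_mk (hf.comp continuous_subtype_val) _
        · refine Continuous.subtype_mk ?_ _
          exact Continuous.smul ((continuous_inv.comp ξ.continuous).comp
            (Continuous.subtype_mk (hf.comp continuous_subtype_val) _)) continuous_subtype_val
      continuous_invFun := by
        refine Continuous.subtype_mk ?_ _
        exact Continuous.smul (ξ.continuous.comp continuous_fst)
          (continuous_subtype_val.comp continuous_snd) }, fun z => rfl⟩⟩
end

section
/- Let $G$ be a topological group acting continuously on a locally path-connected $G$-locally retractile space $X$, and let $H \leq G$ be a subgroup containing the path component of the identity $G_0$. Then $X$ is $H$-locally retractile. -/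
/-- If `X` is a locally path-connected `G`-locally retractile space and `H ≤ G` is a subgroup
containing the path component of the identity, then `X` is `H`-locally retractile. -/
theorem stmt13 (G X : Type*) [Group G] [TopologicalSpace G] [IsTopologicalGroup G]
    [TopologicalSpace X] [MulAction G X] [ContinuousSMul G X] [LocallyPathConnectedSpace X]
    (hret : ∀ x : X, ∃ U : Set X, IsOpen U ∧ x ∈ U ∧
      ∃ ξ : C(U, G), ∀ y : U, ξ y • x = (y : X))
    (H : Subgroup G) (hH : pathComponent (1 : G) ⊆ (H : Set G)) :
    ∀ x : X, ∃ U : Set X, IsOpen U ∧ x ∈ U ∧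
      ∃ ξ : C(U, H), ∀ y : U, (ξ y : G) • x = (y : X) := by
  intro x
  obtain ⟨U, hUo, hxU, ξ, hξ⟩ := hret x
  -- normalize so that the retraction sends `x` to `1`
  set g0 : G := ξ ⟨x, hxU⟩ with hg0
  have hg0x : g0 • x = x := hξ ⟨x, hxU⟩
  let f : C(U, G) := ⟨fun y => ξ y * g0⁻¹, by continuity⟩
  have hf : ∀ y : U, f y • x = (y : X) := by
    intro y
    have : g0⁻¹ • x = x := by
      conv_lhs => rw [← hg0x, inv_smul_smul]
    show (ξ y * g0⁻¹) • x = (y : X)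
    rw [mul_smul, this, hξ y]
  have hfx : f ⟨x, hxU⟩ = 1 := by
    show g0 * g0⁻¹ = 1
    exact mul_inv_cancel g0
  -- take the path component of x in U
  refine ⟨pathComponentIn U x, hUo.pathComponentIn x, mem_pathComponentIn_self hxU, ?_⟩
  have hsub : pathComponentIn U x ⊆ U := pathComponentIn_subset
  -- each point of V is joined to x, so f maps V into H
  have hmem : ∀ y : pathComponentIn U x, f ⟨(y : X), hsub y.2⟩ ∈ H := by
    rintro ⟨y, hy⟩
    have hjoin : JoinedIn U x y := hy
    have : Joined (⟨x, hxU⟩ : U) ⟨y, hsub hy⟩ := hjoin.joined_subtype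
    have hJ : Joined (f ⟨x, hxU⟩) (f ⟨y, hsub hy⟩) := ⟨this.somePath.map f.continuous⟩
    rw [hfx] at hJ
    exact hH (mem_pathComponent_iff.mpr hJ)
  refine ⟨⟨fun y => ⟨f ⟨(y : X), hsub y.2⟩, hmem y⟩, ?_⟩, ?_⟩
  · apply Continuous.subtype_mk
    exact f.continuous.comp (Continuous.subtype_mk continuous_subtype_val _)
  · intro y
    exact hf ⟨(y : X), hsub y.2⟩
end
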